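/- For all ℓ₀, ℓ₁, ℓ₂ ∈ B_c(Y) one has σ₁(ℓ₀ ⋆ ℓ₁, ℓ₂) − σ₁(ℓ₀, ℓ₁ ⋆ ℓ₂) + σ₁(ℓ₂ ⋆ ℓ₀, ℓ₁) = 0; that is, the Hochschild coboundary of σ₁ vanishes, so σ₁ is a cyclic 1-cocycle on the convolution algebra B_c(Y). -/

import Mathlib

open MeasureTheory

noncomputable section

/-- The indicator function of `(-∞, -λ] ⊆ ℝ`, complex-valued. -/
def chi (l : ℝ) (s : ℝ) : ℂ := if s ≤ -l then 1 else 0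

/-- `ℓ` belongs to `B_c(Y)`: it is continuous and supported in `Y × Y × [-R, R]`
for some `R > 0`. -/
def MemBc {Y : Type*} [TopologicalSpace Y] (ℓ : Y → Y → ℝ → ℂ) : Prop :=
  Continuous (fun q : Y × Y × ℝ => ℓ q.1 q.2.1 q.2.2) ∧
    ∃ R > (0 : ℝ), ∀ y y' t, t ∉ Set.Icc (-R) R → ℓ y y' t = 0

/-- The convolution product on `B_c(Y)`:
`(ℓ ⋆ ℓ')(y, y'', u) = ∫_Y ∫_ℝ ℓ(y, y', t) ℓ'(y', y'', u − t) dt dμ(y')`. -/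
def conv {Y : Type*} [MeasurableSpace Y] (μ : Measure Y)
    (ℓ ℓ' : Y → Y → ℝ → ℂ) : Y → Y → ℝ → ℂ :=
  fun y y'' u => ∫ q : Y × ℝ, ℓ y q.1 q.2 * ℓ' q.1 y'' (u - q.2) ∂(μ.prod volume)

/-- Roe's functional `σ₁^λ` in kernel form; `σ₁ := σ₁⁰`. -/
def sigma1 {Y : Type*} [MeasurableSpace Y] (μ : Measure Y) (l : ℝ)
    (ℓ₀ ℓ₁ : Y → Y → ℝ → ℂ) : ℂ :=
  ∫ q : (Y × Y) × ℝ × ℝ,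
    ℓ₀ q.1.1 q.1.2 (q.2.1 - q.2.2) * ℓ₁ q.1.2 q.1.1 (q.2.2 - q.2.1) *
      (chi l q.2.2 - chi l q.2.1) ∂((μ.prod μ).prod (volume.prod volume))

/-! ### Auxiliary material for the proof -/

private lemma chi_meas : Measurable (chi 0) := by
  unfold chi
  exact Measurable.ite (measurableSet_le measurable_id measurable_const)
    measurable_const measurable_const

private lemma chi_norm (x : ℝ) : ‖chi 0 x‖ ≤ 1 := by
  unfold chi; split <;> simp

private lemma chi_norm2 (x y : ℝ) : ‖chi 0 x - chi 0 y‖ ≤ 2 :=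
  le_trans (norm_sub_le _ _) (by linarith [chi_norm x, chi_norm y])

private lemma chi_abs {x y : ℝ} (h : chi 0 x - chi 0 y ≠ 0) :
    |x| ≤ |x - y| ∧ |y| ≤ |x - y| := by
  unfold chi at h
  rw [neg_zero] at h
  rcases le_or_gt x 0 with hx | hx <;> rcases le_or_gt y 0 with hy | hy
  · simp [hx, hy] at h
  · constructor
    · rw [abs_of_nonpos hx, abs_of_nonpos (by linarith : x - y ≤ 0)]; linarith
    · rw [abs_of_pos hy, abs_of_nonpos (by linarith : x - y ≤ 0)]; linarith
  · constructor
    · rw [abs_of_pos hx, abs_of_nonneg (by linarith : 0 ≤ x - y)]; linarith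
    · rw [abs_of_nonpos hy, abs_of_nonneg (by linarith : 0 ≤ x - y)]; linarith
  · rw [if_neg (not_le.mpr hx), if_neg (not_le.mpr hy)] at h
    simp at h

private lemma memBc_bound {Y : Type*} [MetricSpace Y] [CompactSpace Y]
    {ℓ : Y → Y → ℝ → ℂ} (h : MemBc ℓ) :
    ∃ C, 0 ≤ C ∧ ∀ y y' t, ‖ℓ y y' t‖ ≤ C := by
  obtain ⟨hc, R, hR, hsupp⟩ := h
  obtain ⟨C, hC⟩ :=
    (isCompact_univ.prod (isCompact_univ.prod isCompact_Icc)).exists_bound_of_continuousOn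
      (hc.continuousOn (s := (Set.univ : Set Y) ×ˢ (Set.univ : Set Y) ×ˢ Set.Icc (-R) R))
  refine ⟨max C 0, le_max_right _ _, fun y y' t => ?_⟩
  by_cases ht : t ∈ Set.Icc (-R) R
  · exact le_trans (hC (y, y', t) (by simp [ht])) (le_max_left _ _)
  · simp [hsupp y y' t ht]

private lemma memBc_abs {Y : Type*} [TopologicalSpace Y] {ℓ : Y → Y → ℝ → ℂ} {R : ℝ}
    (hsupp : ∀ y y' t, t ∉ Set.Icc (-R) R → ℓ y y' t = 0) :
    ∀ y y' t, ℓ y y' t ≠ 0 → |t| ≤ R := by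
  intro y y' t hne
  by_contra hlt
  exact hne (hsupp y y' t (by rwa [Set.mem_Icc, ← abs_le]))

/-- The three integrands on `((Y×Y)×ℝ×ℝ) × (Y×ℝ)` obtained by expanding the
convolution inside `σ₁`. -/
private def H1x {Y : Type*} (ℓ₀ ℓ₁ ℓ₂ : Y → Y → ℝ → ℂ) :
    (((Y × Y) × ℝ × ℝ) × Y × ℝ) → ℂ := fun z =>
  (ℓ₀ z.1.1.1 z.2.1 z.2.2 * ℓ₁ z.2.1 z.1.1.2 (z.1.2.1 - z.1.2.2 - z.2.2)) *
    (ℓ₂ z.1.1.2 z.1.1.1 (z.1.2.2 - z.1.2.1) * (chi 0 z.1.2.2 - chi 0 z.1.2.1))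

private def H2x {Y : Type*} (ℓ₀ ℓ₁ ℓ₂ : Y → Y → ℝ → ℂ) :
    (((Y × Y) × ℝ × ℝ) × Y × ℝ) → ℂ := fun z =>
  (ℓ₀ z.1.1.1 z.1.1.2 (z.1.2.1 - z.1.2.2) * (chi 0 z.1.2.2 - chi 0 z.1.2.1)) *
    (ℓ₁ z.1.1.2 z.2.1 z.2.2 * ℓ₂ z.2.1 z.1.1.1 (z.1.2.2 - z.1.2.1 - z.2.2))

private def H3x {Y : Type*} (ℓ₀ ℓ₁ ℓ₂ : Y → Y → ℝ → ℂ) :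
    (((Y × Y) × ℝ × ℝ) × Y × ℝ) → ℂ := fun z =>
  (ℓ₂ z.1.1.1 z.2.1 z.2.2 * ℓ₀ z.2.1 z.1.1.2 (z.1.2.1 - z.1.2.2 - z.2.2)) *
    (ℓ₁ z.1.1.2 z.1.1.1 (z.1.2.2 - z.1.2.1) * (chi 0 z.1.2.2 - chi 0 z.1.2.1))

/-- The three changes of variables, from the master space
`((Y×Y)×Y) × ((ℝ×ℝ)×ℝ)` (coordinates `(((y₀,y₂),y₁),((s₀,s₂),s₁))`). -/
private def Phi1 {Y : Type*} : (((Y × Y) × Y) × (ℝ × ℝ) × ℝ) → (((Y × Y) × ℝ × ℝ) × Y × ℝ) :=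
  fun w => ((w.1.1, w.2.1), (w.1.2, w.2.1.1 - w.2.2))

private def Phi2 {Y : Type*} : (((Y × Y) × Y) × (ℝ × ℝ) × ℝ) → (((Y × Y) × ℝ × ℝ) × Y × ℝ) :=
  fun w => (((w.1.1.1, w.1.2), (w.2.1.1, w.2.2)), (w.1.1.2, w.2.2 - w.2.1.2))

private def Phi3 {Y : Type*} : (((Y × Y) × Y) × (ℝ × ℝ) × ℝ) → (((Y × Y) × ℝ × ℝ) × Y × ℝ) :=
  fun w => (((w.1.1.2, w.1.2), (w.2.1.2, w.2.2)), (w.1.1.1, w.2.1.2 - w.2.1.1))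

/-- the Hochschild coboundary of `σ₁` vanishes on the convolution
algebra `B_c(Y)`: `σ₁(ℓ₀⋆ℓ₁, ℓ₂) − σ₁(ℓ₀, ℓ₁⋆ℓ₂) + σ₁(ℓ₂⋆ℓ₀, ℓ₁) = 0`. -/
theorem sigma1_hochschild_cocycle
    {Y : Type*} [MetricSpace Y] [CompactSpace Y] [MeasurableSpace Y] [BorelSpace Y]
    (μ : Measure Y) [IsFiniteMeasure μ]
    (ℓ₀ ℓ₁ ℓ₂ : Y → Y → ℝ → ℂ) (h₀ : MemBc ℓ₀) (h₁ : MemBc ℓ₁) (h₂ : MemBc ℓ₂) :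
    sigma1 μ 0 (conv μ ℓ₀ ℓ₁) ℓ₂ - sigma1 μ 0 ℓ₀ (conv μ ℓ₁ ℓ₂) +
      sigma1 μ 0 (conv μ ℓ₂ ℓ₀) ℓ₁ = 0 := by
  classical
  obtain ⟨C₀, hC₀, hb₀⟩ := memBc_bound h₀
  obtain ⟨C₁, hC₁, hb₁⟩ := memBc_bound h₁
  obtain ⟨C₂, hC₂, hb₂⟩ := memBc_bound h₂
  obtain ⟨hcont₀, R₀, hR₀, hs₀⟩ := h₀
  obtain ⟨hcont₁, R₁, hR₁, hs₁⟩ := h₁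
  obtain ⟨hcont₂, R₂, hR₂, hs₂⟩ := h₂
  have ha₀ := memBc_abs hs₀
  have ha₁ := memBc_abs hs₁
  have ha₂ := memBc_abs hs₂
  set R : ℝ := R₀ + R₁ + R₂ with hRdef
  -- measures
  set M0 : Measure (((Y × Y) × Y) × (ℝ × ℝ) × ℝ) :=
    ((μ.prod μ).prod μ).prod (((volume : Measure ℝ).prod volume).prod volume) with hM0
  set MT : Measure (((Y × Y) × ℝ × ℝ) × Y × ℝ) :=
    ((μ.prod μ).prod ((volume : Measure ℝ).prod volume)).prod
      (μ.prod (volume : Measure ℝ)) with hMT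
  -- basic measurability of the kernels
  have m₀ : Measurable (fun q : Y × Y × ℝ => ℓ₀ q.1 q.2.1 q.2.2) := hcont₀.measurable
  have m₁ : Measurable (fun q : Y × Y × ℝ => ℓ₁ q.1 q.2.1 q.2.2) := hcont₁.measurable
  have m₂ : Measurable (fun q : Y × Y × ℝ => ℓ₂ q.1 q.2.1 q.2.2) := hcont₂.measurable
  have comp3 : ∀ {α : Type _} [MeasurableSpace α] (ℓ : Y → Y → ℝ → ℂ),
      Measurable (fun q : Y × Y × ℝ => ℓ q.1 q.2.1 q.2.2) →
      ∀ {f g : α → Y} {e : α → ℝ}, Measurable f → Measurable g → Measurable e →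
      Measurable (fun x => ℓ (f x) (g x) (e x)) := by
    intro α _ ℓ hm f g e hf hg he
    exact hm.comp (hf.prodMk (hg.prodMk he))
  -- measurability of the three integrands
  have mH1 : Measurable (H1x ℓ₀ ℓ₁ ℓ₂) := by
    unfold H1x
    exact ((comp3 ℓ₀ m₀ measurable_fst.fst.fst measurable_snd.fst measurable_snd.snd).mul
        (comp3 ℓ₁ m₁ measurable_snd.fst measurable_fst.fst.snd
          ((measurable_fst.snd.fst.sub measurable_fst.snd.snd).sub measurable_snd.snd))).mul
      ((comp3 ℓ₂ m₂ measurable_fst.fst.snd measurable_fst.fst.fst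
          (measurable_fst.snd.snd.sub measurable_fst.snd.fst)).mul
        ((chi_meas.comp measurable_fst.snd.snd).sub (chi_meas.comp measurable_fst.snd.fst)))
  have mH2 : Measurable (H2x ℓ₀ ℓ₁ ℓ₂) := by
    unfold H2x
    exact ((comp3 ℓ₀ m₀ measurable_fst.fst.fst measurable_fst.fst.snd
          (measurable_fst.snd.fst.sub measurable_fst.snd.snd)).mul
        ((chi_meas.comp measurable_fst.snd.snd).sub (chi_meas.comp measurable_fst.snd.fst))).mul
      ((comp3 ℓ₁ m₁ measurable_fst.fst.snd measurable_snd.fst measurable_snd.snd).mul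
        (comp3 ℓ₂ m₂ measurable_snd.fst measurable_fst.fst.fst
          ((measurable_fst.snd.snd.sub measurable_fst.snd.fst).sub measurable_snd.snd)))
  have mH3 : Measurable (H3x ℓ₀ ℓ₁ ℓ₂) := by
    unfold H3x
    exact ((comp3 ℓ₂ m₂ measurable_fst.fst.fst measurable_snd.fst measurable_snd.snd).mul
        (comp3 ℓ₀ m₀ measurable_snd.fst measurable_fst.fst.snd
          ((measurable_fst.snd.fst.sub measurable_fst.snd.snd).sub measurable_snd.snd))).mul
      ((comp3 ℓ₁ m₁ measurable_fst.fst.snd measurable_fst.fst.fst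
          (measurable_fst.snd.snd.sub measurable_fst.snd.fst)).mul
        ((chi_meas.comp measurable_fst.snd.snd).sub (chi_meas.comp measurable_fst.snd.fst)))
  -- the "middle exchange" map is measure preserving
  have hTheta : MeasurePreserving
      (fun w : ((Y × Y) × Y) × (ℝ × ℝ) × ℝ => ((w.1.1, w.2.1), (w.1.2, w.2.2))) M0 MT := by
    have h1 := measurePreserving_prodAssoc (μ.prod μ) μ
      (((volume : Measure ℝ).prod (volume : Measure ℝ)).prod (volume : Measure ℝ))
    have hσ : MeasurePreserving
        (fun x : Y × (ℝ × ℝ) × ℝ => ((x.2.1), (x.1, x.2.2)))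
        (μ.prod (((volume : Measure ℝ).prod volume).prod volume))
        (((volume : Measure ℝ).prod volume).prod (μ.prod volume)) := by
      have ha := (measurePreserving_prodAssoc μ
        ((volume : Measure ℝ).prod (volume : Measure ℝ)) (volume : Measure ℝ)).symm MeasurableEquiv.prodAssoc
      have hb : MeasurePreserving (Prod.map (Prod.swap : Y × ℝ × ℝ → (ℝ × ℝ) × Y) id)
          ((μ.prod ((volume : Measure ℝ).prod volume)).prod volume)
          ((((volume : Measure ℝ).prod volume).prod μ).prod volume) :=
        Measure.measurePreserving_swap.prod (MeasurePreserving.id (volume : Measure ℝ))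
      have hc := measurePreserving_prodAssoc ((volume : Measure ℝ).prod (volume : Measure ℝ)) μ
        (volume : Measure ℝ)
      exact hc.comp (hb.comp ha)
    have h2 := (MeasurePreserving.id (μ.prod μ)).prod hσ
    have h3 := (measurePreserving_prodAssoc (μ.prod μ)
      ((volume : Measure ℝ).prod (volume : Measure ℝ)) (μ.prod (volume : Measure ℝ))).symm
      MeasurableEquiv.prodAssoc
    exact h3.comp (h2.comp h1)
  -- skew translation on a pair: (A, r) ↦ (A, A.1 - r)
  have hskewR : MeasurePreserving
      (fun B : (ℝ × ℝ) × ℝ => (B.1, B.1.1 - B.2))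
      (((volume : Measure ℝ).prod volume).prod volume)
      (((volume : Measure ℝ).prod volume).prod volume) :=
    by
      have := (MeasurePreserving.id ((volume : Measure ℝ).prod volume)).skew_product
        (g := fun (A : ℝ × ℝ) (r : ℝ) => A.1 - r)
        (by exact measurable_fst.fst.sub measurable_snd)
        (Filter.Eventually.of_forall fun p =>
          (Measure.measurePreserving_sub_left volume p.1).map_eq)
      exact this
  have hskew2 : MeasurePreserving
      (fun p : ℝ × ℝ => (p.1, p.1 - p.2)) ((volume : Measure ℝ).prod volume)
      ((volume : Measure ℝ).prod volume) :=
    by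
      have := (MeasurePreserving.id (volume : Measure ℝ)).skew_product
        (g := fun (a r : ℝ) => a - r)
        (by exact measurable_fst.sub measurable_snd)
        (Filter.Eventually.of_forall fun a =>
          (Measure.measurePreserving_sub_left volume a).map_eq)
      exact this
  -- measure preservation of Phi1, Phi2, Phi3
  have hPhi1 : MeasurePreserving (Phi1 (Y := Y)) M0 MT := by
    have hΨ : MeasurePreserving
        (fun w : ((Y × Y) × Y) × (ℝ × ℝ) × ℝ => (w.1, (w.2.1, w.2.1.1 - w.2.2))) M0 M0 :=
      (MeasurePreserving.id ((μ.prod μ).prod μ)).prod hskewR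
    exact hTheta.comp hΨ
  have hPhi2 : MeasurePreserving (Phi2 (Y := Y)) M0 MT := by
    have hY : MeasurePreserving
        (fun A : (Y × Y) × Y => ((A.1.1, A.2), A.1.2))
        ((μ.prod μ).prod μ) ((μ.prod μ).prod μ) := by
      have ha := measurePreserving_prodAssoc μ μ μ
      have hb := (MeasurePreserving.id μ).prod
        (Measure.measurePreserving_swap (μ := μ) (ν := μ))
      have hc := (measurePreserving_prodAssoc μ μ μ).symm MeasurableEquiv.prodAssoc
      exact hc.comp (hb.comp ha)
    have hRmap : MeasurePreserving
        (fun B : (ℝ × ℝ) × ℝ => ((B.1.1, B.2), B.2 - B.1.2))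
        (((volume : Measure ℝ).prod volume).prod volume)
        (((volume : Measure ℝ).prod volume).prod volume) := by
      have ha := measurePreserving_prodAssoc (volume : Measure ℝ) (volume : Measure ℝ) (volume : Measure ℝ)
      have hb := (MeasurePreserving.id (volume : Measure ℝ)).prod
        (hskew2.comp (Measure.measurePreserving_swap
          (μ := (volume : Measure ℝ)) (ν := (volume : Measure ℝ))))
      have hc := (measurePreserving_prodAssoc (volume : Measure ℝ) (volume : Measure ℝ) (volume : Measure ℝ)).symm
        MeasurableEquiv.prodAssoc
      exact hc.comp (hb.comp ha)
    exact hTheta.comp (hY.prod hRmap)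
  have hPhi3 : MeasurePreserving (Phi3 (Y := Y)) M0 MT := by
    have hY : MeasurePreserving
        (fun A : (Y × Y) × Y => ((A.1.2, A.2), A.1.1))
        ((μ.prod μ).prod μ) ((μ.prod μ).prod μ) := by
      have ha := measurePreserving_prodAssoc μ μ μ
      have hb := Measure.measurePreserving_swap (μ := μ) (ν := μ.prod μ)
      exact hb.comp ha
    have hRmap : MeasurePreserving
        (fun B : (ℝ × ℝ) × ℝ => ((B.1.2, B.2), B.1.2 - B.1.1))
        (((volume : Measure ℝ).prod volume).prod volume)
        (((volume : Measure ℝ).prod volume).prod volume) := by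
      have ha := measurePreserving_prodAssoc (volume : Measure ℝ) (volume : Measure ℝ) (volume : Measure ℝ)
      have hb := Measure.measurePreserving_swap (μ := (volume : Measure ℝ))
        (ν := (volume : Measure ℝ).prod (volume : Measure ℝ))
      have hc : MeasurePreserving
          (fun p : (ℝ × ℝ) × ℝ => (p.1, p.1.1 - p.2))
          (((volume : Measure ℝ).prod volume).prod volume)
          (((volume : Measure ℝ).prod volume).prod volume) := hskewR
      exact hc.comp (hb.comp ha)
    exact hTheta.comp (hY.prod hRmap)
  -- generic integrability criterion on the master space
  have key_int : ∀ (K : (((Y × Y) × Y) × (ℝ × ℝ) × ℝ) → ℂ) (C : ℝ), 0 ≤ C → Measurable K →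
      (∀ w, K w ≠ 0 → ‖K w‖ ≤ C ∧ |w.2.1.1| ≤ R ∧ |w.2.1.2| ≤ R ∧ |w.2.2| ≤ R) →
      Integrable K M0 := by
    intro K C hC hK hsupp
    set S : Set (((Y × Y) × Y) × (ℝ × ℝ) × ℝ) :=
      Set.univ ×ˢ ((Set.Icc (-R) R ×ˢ Set.Icc (-R) R) ×ˢ Set.Icc (-R) R) with hS
    have hSm : MeasurableSet S :=
      MeasurableSet.univ.prod
        ((measurableSet_Icc.prod measurableSet_Icc).prod measurableSet_Icc)
    have hSfin : M0 S < ⊤ := by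
      rw [hS, hM0, Measure.prod_prod]
      refine ENNReal.mul_lt_top ?_ ?_
      · exact measure_lt_top _ _
      · rw [Measure.prod_prod, Measure.prod_prod, Real.volume_Icc]
        exact ENNReal.mul_lt_top
          (ENNReal.mul_lt_top ENNReal.ofReal_lt_top ENNReal.ofReal_lt_top)
          ENNReal.ofReal_lt_top
    refine Integrable.mono' (g := S.indicator fun _ => C) ((integrable_indicator_iff hSm).2 ?_)
      hK.aestronglyMeasurable (Filter.Eventually.of_forall fun w => ?_)
    · exact integrableOn_const hSfin.ne
    · by_cases h0 : K w = 0
      · rw [h0]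
        simpa using Set.indicator_nonneg (fun _ _ => hC) w
      · obtain ⟨hCw, h1, h2, h3⟩ := hsupp w h0
        have hw : w ∈ S := by
          refine ⟨Set.mem_univ _, ⟨⟨?_, ?_⟩, ?_⟩⟩ <;> rw [Set.mem_Icc, ← abs_le]
          exacts [h1, h2, h3]
        rwa [Set.indicator_of_mem hw]
  -- integrability of the three pulled-back integrands
  have hK1 : Integrable (fun w => H1x ℓ₀ ℓ₁ ℓ₂ (Phi1 w)) M0 := by
    refine key_int _ (C₀ * C₁ * (C₂ * 2)) (by positivity) (mH1.comp hPhi1.measurable) ?_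
    rintro ⟨⟨⟨a, b⟩, c⟩, ⟨⟨u, v⟩, r⟩⟩ hne
    simp only [H1x, Phi1] at hne ⊢
    have h1 : ℓ₀ a c (u - r) ≠ 0 := fun h => hne (by rw [h]; ring)
    have h2 : ℓ₁ c b (u - v - (u - r)) ≠ 0 := fun h => hne (by rw [h]; ring)
    have h3 : ℓ₂ b a (v - u) ≠ 0 := fun h => hne (by rw [h]; ring)
    have h4 : chi 0 v - chi 0 u ≠ 0 := fun h => hne (by rw [h]; ring)
    have hvu := ha₂ _ _ _ h3
    obtain ⟨hv, hu⟩ := chi_abs h4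
    have hur := ha₀ _ _ _ h1
    have hr : |r| ≤ |u| + |u - r| := by
      have := abs_sub u (u - r)
      rwa [sub_sub_cancel] at this
    refine ⟨?_, by linarith, by linarith, by linarith⟩
    simp only [norm_mul]
    exact mul_le_mul (mul_le_mul (hb₀ _ _ _) (hb₁ _ _ _) (norm_nonneg _) hC₀)
      (mul_le_mul (hb₂ _ _ _) (chi_norm2 _ _) (norm_nonneg _) hC₂)
      (mul_nonneg (norm_nonneg _) (norm_nonneg _)) (by positivity)
  have hK2 : Integrable (fun w => H2x ℓ₀ ℓ₁ ℓ₂ (Phi2 w)) M0 := by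
    refine key_int _ (C₀ * 2 * (C₁ * C₂)) (by positivity) (mH2.comp hPhi2.measurable) ?_
    rintro ⟨⟨⟨a, b⟩, c⟩, ⟨⟨u, v⟩, r⟩⟩ hne
    simp only [H2x, Phi2] at hne ⊢
    have h1 : ℓ₀ a c (u - r) ≠ 0 := fun h => hne (by rw [h]; ring)
    have h2 : ℓ₁ c b (r - v) ≠ 0 := fun h => hne (by rw [h]; ring)
    have h4 : chi 0 r - chi 0 u ≠ 0 := fun h => hne (by rw [h]; ring)
    obtain ⟨hr, hu⟩ := chi_abs h4
    have hur := ha₀ _ _ _ h1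
    have hrv := ha₁ _ _ _ h2
    have hru : |r - u| ≤ R₀ := by rwa [abs_sub_comm]
    have hv : |v| ≤ |r| + |r - v| := by
      have := abs_sub r (r - v)
      rwa [sub_sub_cancel] at this
    refine ⟨?_, by linarith, by linarith, by linarith⟩
    simp only [norm_mul]
    exact mul_le_mul (mul_le_mul (hb₀ _ _ _) (chi_norm2 _ _) (norm_nonneg _) hC₀)
      (mul_le_mul (hb₁ _ _ _) (hb₂ _ _ _) (norm_nonneg _) hC₁)
      (mul_nonneg (norm_nonneg _) (norm_nonneg _)) (by positivity)
  have hK3 : Integrable (fun w => H3x ℓ₀ ℓ₁ ℓ₂ (Phi3 w)) M0 := by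
    refine key_int _ (C₂ * C₀ * (C₁ * 2)) (by positivity) (mH3.comp hPhi3.measurable) ?_
    rintro ⟨⟨⟨a, b⟩, c⟩, ⟨⟨u, v⟩, r⟩⟩ hne
    simp only [H3x, Phi3] at hne ⊢
    have h2 : ℓ₁ c b (r - v) ≠ 0 := fun h => hne (by rw [h]; ring)
    have h3 : ℓ₂ b a (v - u) ≠ 0 := fun h => hne (by rw [h]; ring)
    have h4 : chi 0 r - chi 0 v ≠ 0 := fun h => hne (by rw [h]; ring)
    obtain ⟨hr, hv⟩ := chi_abs h4
    have hrv := ha₁ _ _ _ h2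
    have hvu := ha₂ _ _ _ h3
    have hu : |u| ≤ |v| + |v - u| := by
      have := abs_sub v (v - u)
      rwa [sub_sub_cancel] at this
    refine ⟨?_, by linarith, by linarith, by linarith⟩
    simp only [norm_mul]
    exact mul_le_mul (mul_le_mul (hb₂ _ _ _) (hb₀ _ _ _) (norm_nonneg _) hC₂)
      (mul_le_mul (hb₁ _ _ _) (chi_norm2 _ _) (norm_nonneg _) hC₁)
      (mul_nonneg (norm_nonneg _) (norm_nonneg _)) (by positivity)
  -- integrability of the H's themselves
  have hH1int : Integrable (H1x ℓ₀ ℓ₁ ℓ₂) MT := by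
    rw [← hPhi1.map_eq]
    exact (integrable_map_measure mH1.aestronglyMeasurable hPhi1.aemeasurable).2 hK1
  have hH2int : Integrable (H2x ℓ₀ ℓ₁ ℓ₂) MT := by
    rw [← hPhi2.map_eq]
    exact (integrable_map_measure mH2.aestronglyMeasurable hPhi2.aemeasurable).2 hK2
  have hH3int : Integrable (H3x ℓ₀ ℓ₁ ℓ₂) MT := by
    rw [← hPhi3.map_eq]
    exact (integrable_map_measure mH3.aestronglyMeasurable hPhi3.aemeasurable).2 hK3
  -- the three sigma1 terms as integrals over the master space
  have t1 : sigma1 μ 0 (conv μ ℓ₀ ℓ₁) ℓ₂ = ∫ w, H1x ℓ₀ ℓ₁ ℓ₂ (Phi1 w) ∂M0 := by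
    calc sigma1 μ 0 (conv μ ℓ₀ ℓ₁) ℓ₂
        = ∫ p : (Y × Y) × ℝ × ℝ, ∫ q : Y × ℝ, H1x ℓ₀ ℓ₁ ℓ₂ (p, q)
            ∂(μ.prod volume) ∂((μ.prod μ).prod (volume.prod volume)) := by
          unfold sigma1 conv
          refine integral_congr_ae (Filter.Eventually.of_forall fun p => ?_)
          simp only []
          rw [mul_assoc, ← integral_mul_const]
          rfl
      _ = ∫ z, H1x ℓ₀ ℓ₁ ℓ₂ z ∂MT := by
          rw [hMT]
          exact integral_integral hH1int
      _ = ∫ w, H1x ℓ₀ ℓ₁ ℓ₂ (Phi1 w) ∂M0 := by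
          rw [← hPhi1.map_eq, integral_map hPhi1.aemeasurable mH1.aestronglyMeasurable]
  have t2 : sigma1 μ 0 ℓ₀ (conv μ ℓ₁ ℓ₂) = ∫ w, H2x ℓ₀ ℓ₁ ℓ₂ (Phi2 w) ∂M0 := by
    calc sigma1 μ 0 ℓ₀ (conv μ ℓ₁ ℓ₂)
        = ∫ p : (Y × Y) × ℝ × ℝ, ∫ q : Y × ℝ, H2x ℓ₀ ℓ₁ ℓ₂ (p, q)
            ∂(μ.prod volume) ∂((μ.prod μ).prod (volume.prod volume)) := by
          unfold sigma1 conv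
          refine integral_congr_ae (Filter.Eventually.of_forall fun p => ?_)
          simp only []
          rw [mul_right_comm, ← integral_const_mul]
          rfl
      _ = ∫ z, H2x ℓ₀ ℓ₁ ℓ₂ z ∂MT := by
          rw [hMT]
          exact integral_integral hH2int
      _ = ∫ w, H2x ℓ₀ ℓ₁ ℓ₂ (Phi2 w) ∂M0 := by
          rw [← hPhi2.map_eq, integral_map hPhi2.aemeasurable mH2.aestronglyMeasurable]
  have t3 : sigma1 μ 0 (conv μ ℓ₂ ℓ₀) ℓ₁ = ∫ w, H3x ℓ₀ ℓ₁ ℓ₂ (Phi3 w) ∂M0 := by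
    calc sigma1 μ 0 (conv μ ℓ₂ ℓ₀) ℓ₁
        = ∫ p : (Y × Y) × ℝ × ℝ, ∫ q : Y × ℝ, H3x ℓ₀ ℓ₁ ℓ₂ (p, q)
            ∂(μ.prod volume) ∂((μ.prod μ).prod (volume.prod volume)) := by
          unfold sigma1 conv
          refine integral_congr_ae (Filter.Eventually.of_forall fun p => ?_)
          simp only []
          rw [mul_assoc, ← integral_mul_const]
          rfl
      _ = ∫ z, H3x ℓ₀ ℓ₁ ℓ₂ z ∂MT := by
          rw [hMT]
          exact integral_integral hH3int
      _ = ∫ w, H3x ℓ₀ ℓ₁ ℓ₂ (Phi3 w) ∂M0 := by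
          rw [← hPhi3.map_eq, integral_map hPhi3.aemeasurable mH3.aestronglyMeasurable]
  rw [t1, t2, t3]
  have key : (∫ w, H1x ℓ₀ ℓ₁ ℓ₂ (Phi1 w) ∂M0) - (∫ w, H2x ℓ₀ ℓ₁ ℓ₂ (Phi2 w) ∂M0) +
      (∫ w, H3x ℓ₀ ℓ₁ ℓ₂ (Phi3 w) ∂M0) =
      ∫ w, (H1x ℓ₀ ℓ₁ ℓ₂ (Phi1 w) - H2x ℓ₀ ℓ₁ ℓ₂ (Phi2 w) + H3x ℓ₀ ℓ₁ ℓ₂ (Phi3 w)) ∂M0 := by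
    have hsub : Integrable
        (fun w => H1x ℓ₀ ℓ₁ ℓ₂ (Phi1 w) - H2x ℓ₀ ℓ₁ ℓ₂ (Phi2 w)) M0 := hK1.sub hK2
    rw [integral_add hsub hK3, integral_sub hK1 hK2]
  rw [key]
  have hzero : ∀ w : ((Y × Y) × Y) × (ℝ × ℝ) × ℝ,
      H1x ℓ₀ ℓ₁ ℓ₂ (Phi1 w) - H2x ℓ₀ ℓ₁ ℓ₂ (Phi2 w) + H3x ℓ₀ ℓ₁ ℓ₂ (Phi3 w) = 0 := by
    rintro ⟨⟨⟨a, b⟩, c⟩, ⟨⟨u, v⟩, r⟩⟩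
    simp only [H1x, H2x, H3x, Phi1, Phi2, Phi3]
    rw [show u - v - (u - r) = r - v by ring, show r - u - (r - v) = v - u by ring,
      show v - r - (v - u) = u - r by ring]
    ring
  simp only [hzero]
  exact integral_zero _ _

end
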